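/- Let q be a prime power, m a divisor of q−1, and π a (q−1,m)-piecewise affine permutation with principal product P and principal sum S. Then every cycle of π has length equal to the prime ℓ if and only if ℓ = m, P ≡ 1 (mod (q−1)/m), and S ≡ 0 (mod q−1). In that case π decomposes into exactly (q−1)/m cycles, each of length m. -/

import Mathlib

/-- `psi k x` is the representative of `x` mod `k` in `[1, k]`. -/
def psi (k x : ℕ) : ℕ := if x % k = 0 then k else x % k

/-- `π` is an `(n,m)`-piecewise affine permutation of `[1,n]` with parameters
`(a, b, c)`: it permutes `[1,n]` (and is the identity elsewhere), the entries of
`a, b` lie in `[1,n]`, the entries of `c` form a permutation of `[1,m]`, and for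
`x ∈ [1,n]` with `Ψ_m(x) = c_i` one has `π(x) = Ψ_n(a_i x + b_i)` and
`Ψ_m(π(x)) = c_{i+1}`, indices cyclic modulo `m`. -/
def IsPAP (n m : ℕ) [NeZero m] (a b c : Fin m → ℕ) (π : ℕ → ℕ) : Prop :=
  Set.BijOn π (Set.Icc 1 n) (Set.Icc 1 n) ∧
  (∀ x : ℕ, x ∉ Set.Icc 1 n → π x = x) ∧
  (∀ i, a i ∈ Set.Icc 1 n) ∧ (∀ i, b i ∈ Set.Icc 1 n) ∧
  (∀ i, c i ∈ Set.Icc 1 m) ∧ Function.Injective c ∧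
  ∀ x ∈ Set.Icc 1 n, ∀ i, psi m x = c i →
    π x = psi n (a i * x + b i) ∧ psi m (π x) = c (i + 1)

lemma psi_bounds {k : ℕ} (hk : 0 < k) (x : ℕ) : 1 ≤ psi k x ∧ psi k x ≤ k := by
  unfold psi
  split
  · exact ⟨hk, le_refl k⟩
  · next h =>
    exact ⟨Nat.one_le_iff_ne_zero.2 h, le_of_lt (Nat.mod_lt _ hk)⟩

lemma psi_eq_of_modeq {k x y : ℕ} (hk : 0 < k) (hx : x ∈ Set.Icc 1 k)
    (h : y % k = x % k) : psi k y = x := by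
  obtain ⟨hx1, hx2⟩ := hx
  unfold psi
  rcases eq_or_lt_of_le hx2 with rfl | hlt
  · simp [h]
  · have hxk : x % k = x := Nat.mod_eq_of_lt hlt
    rw [h, hxk, if_neg (by omega)]

open Fin.NatCast Fin.CommRing

/-- A `(q-1,m)`-p.a.p. `π` has all cycles of prime length `ℓ` iff `ℓ = m`,
`P ≡ 1 (mod (q-1)/m)` and `S ≡ 0 (mod q-1)`; in that case `π` decomposes into
exactly `(q-1)/m` cycles of length `m` (counted by the multiples of `m` lying
in cycles of length `m`, one per cycle). -/
theorem pap_prime_cycles (q : ℕ) (hq : ∃ p k : ℕ, p.Prime ∧ 0 < k ∧ q = p ^ k)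
    (m : ℕ) [NeZero m] (hm : 1 < m) (hmq : m ∣ q - 1) (ℓ : ℕ) (hℓ : ℓ.Prime)
    (a b c : Fin m → ℕ) (π : ℕ → ℕ) (hpap : IsPAP (q - 1) m a b c π)
    (P S : ℕ) (hP : P = ∏ i, a i) (hSmem : S ∈ Set.Icc 1 (q - 1))
    (hS : ∀ x ∈ Set.Icc 1 (q - 1), m ∣ x → π^[m] x = psi (q - 1) (P * x + S)) :
    ((∀ x ∈ Set.Icc 1 (q - 1), Function.minimalPeriod π x = ℓ) ↔
      (ℓ = m ∧ P ≡ 1 [MOD (q - 1) / m] ∧ S ≡ 0 [MOD q - 1])) ∧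
    ((ℓ = m ∧ P ≡ 1 [MOD (q - 1) / m] ∧ S ≡ 0 [MOD q - 1]) →
      ((Finset.Icc 1 (q - 1)).filter
          (fun x => m ∣ x ∧ Function.minimalPeriod π x = m)).card = (q - 1) / m) := by
  have hq2 : 2 ≤ q := by
    obtain ⟨p, k, hp, hk, rfl⟩ := hq
    calc 2 ≤ p := hp.two_le
    _ ≤ p ^ k := Nat.le_self_pow (by omega) p
  have hn : 1 ≤ q - 1 := by omega
  have hmn : m ≤ q - 1 := Nat.le_of_dvd (by omega) hmq
  have hm0 : 0 < m := by omega
  obtain ⟨hbij, hout, ha, hb, hc, hcinj, hstep⟩ := hpap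
  obtain ⟨hS1, hS2⟩ := Set.mem_Icc.mp hSmem
  have hP1le : 1 ≤ P := by
    rw [hP]
    exact Finset.one_le_prod' (fun i _ => (Set.mem_Icc.mp (ha i)).1)
  -- global injectivity
  have hinj : Function.Injective π := by
    intro x y hxy
    by_cases hx : x ∈ Set.Icc 1 (q - 1) <;> by_cases hy : y ∈ Set.Icc 1 (q - 1)
    · exact hbij.injOn hx hy hxy
    · exfalso; have h1 := hbij.mapsTo hx; rw [hxy, hout y hy] at h1; exact hy h1
    · exfalso; have h1 := hbij.mapsTo hy; rw [← hxy, hout x hx] at h1; exact hx h1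
    · rwa [hout x hx, hout y hy] at hxy
  -- surjectivity of c onto [1, m]
  have hcsurj : ∀ v : ℕ, 1 ≤ v → v ≤ m → ∃ i, c i = v := by
    have himg : Finset.univ.image c = Finset.Icc 1 m := by
      apply Finset.eq_of_subset_of_card_le
      · intro v hv
        simp only [Finset.mem_image, Finset.mem_univ, true_and] at hv
        obtain ⟨i, rfl⟩ := hv
        simpa [Finset.mem_Icc] using Set.mem_Icc.mp (hc i)
      · rw [Finset.card_image_of_injective _ hcinj, Finset.card_univ]
        simp [Nat.card_Icc]
    intro v hv1 hv2
    have : v ∈ Finset.univ.image c := by rw [himg]; simp [Finset.mem_Icc]; omega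
    simpa using this
  -- orbit lemma
  have horb : ∀ x ∈ Set.Icc 1 (q - 1), ∀ i : Fin m, psi m x = c i →
      ∀ j : ℕ, π^[j] x ∈ Set.Icc 1 (q - 1) ∧ psi m (π^[j] x) = c (i + j) := by
    intro x hx i hi j
    induction j with
    | zero => simp only [Function.iterate_zero_apply, Nat.cast_zero, add_zero]; exact ⟨hx, hi⟩
    | succ j ih =>
      obtain ⟨ihm, ihpsi⟩ := ih
      have hstep' := hstep _ ihm (i + j) ihpsi
      refine ⟨?_, ?_⟩
      · rw [Function.iterate_succ_apply']
        exact hbij.mapsTo ihm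
      · rw [Function.iterate_succ_apply', hstep'.2]
        congr 1
        push_cast
        ring
  -- m divides every period
  have hmdvd : ∀ x ∈ Set.Icc 1 (q - 1), ∀ T : ℕ, π^[T] x = x → m ∣ T := by
    intro x hx T hT
    obtain ⟨i, hi⟩ := hcsurj (psi m x) (psi_bounds hm0 x).1 (psi_bounds hm0 x).2
    have h2 := (horb x hx i hi.symm T).2
    rw [hT, ← hi] at h2
    have h3 : i = i + (T : Fin m) := hcinj h2
    have h4 : (T : Fin m) = 0 := by
      have := left_eq_add.mp h3
      exact this
    exact Fin.natCast_eq_zero.mp h4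
  -- key: the conditions imply π^[m] = id on [1, q-1]
  have key : P ≡ 1 [MOD (q - 1) / m] → S ≡ 0 [MOD q - 1] →
      ∀ x ∈ Set.Icc 1 (q - 1), Function.minimalPeriod π x = m := by
    intro hPmod hS0
    have hSn : S = q - 1 := by
      have h0 : S % (q - 1) = 0 := by
        have := hS0
        simpa [Nat.ModEq] using this
      have := Nat.le_of_dvd (by omega) (Nat.dvd_of_mod_eq_zero h0)
      omega
    have hPdvd : (q - 1) / m ∣ P - 1 := (Nat.modEq_iff_dvd' hP1le).mp hPmod.symm
    have hfixmul : ∀ x ∈ Set.Icc 1 (q - 1), m ∣ x → π^[m] x = x := by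
      intro x hx hdx
      rw [hS x hx hdx]
      apply psi_eq_of_modeq (by omega) hx
      obtain ⟨t, rfl⟩ := hdx
      have h1 : (q - 1) ∣ (P - 1) * (m * t) := by
        have h1' : (q - 1) ∣ (P - 1) * m := by
          conv_lhs => rw [← Nat.div_mul_cancel hmq]
          exact Nat.mul_dvd_mul hPdvd dvd_rfl
        have : (P - 1) * (m * t) = (P - 1) * m * t := by ring
        rw [this]
        exact h1'.mul_right t
      have hle : m * t ≤ P * (m * t) := Nat.le_mul_of_pos_left _ (by omega)
      have h2 : m * t ≡ P * (m * t) [MOD q - 1] := by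
        apply (Nat.modEq_iff_dvd' hle).mpr
        rwa [← Nat.sub_one_mul]
      rw [hSn, Nat.add_mod_right]
      exact h2.symm
    have hfixall : ∀ x ∈ Set.Icc 1 (q - 1), π^[m] x = x := by
      intro x hx
      obtain ⟨i, hi⟩ := hcsurj (psi m x) (psi_bounds hm0 x).1 (psi_bounds hm0 x).2
      obtain ⟨i', hi'⟩ := hcsurj m hm0 le_rfl
      have hj : i + ((i' - i : Fin m).val : Fin m) = i' := by
        rw [Fin.cast_val_eq_self]
        exact add_sub_cancel i i'
      obtain ⟨hy, hypsi⟩ := horb x hx i hi.symm (i' - i : Fin m).val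
      rw [hj, hi'] at hypsi
      have hydvd : m ∣ π^[(i' - i : Fin m).val] x := by
        unfold psi at hypsi
        by_cases h : (π^[(i' - i : Fin m).val] x) % m = 0
        · exact Nat.dvd_of_mod_eq_zero h
        · rw [if_neg h] at hypsi
          have := Nat.mod_lt (π^[(i' - i : Fin m).val] x) hm0
          omega
      have hyfix := hfixmul _ hy hydvd
      have hcomm : π^[(i' - i : Fin m).val] (π^[m] x) = π^[(i' - i : Fin m).val] x := by
        rw [← Function.iterate_add_apply, Nat.add_comm, Function.iterate_add_apply, hyfix]
      exact (hinj.iterate _) hcomm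
    intro x hx
    have h1 : Function.IsPeriodicPt π m x := hfixall x hx
    have h2 : Function.minimalPeriod π x ∣ m := h1.minimalPeriod_dvd
    have h3 : m ∣ Function.minimalPeriod π x :=
      hmdvd x hx _ Function.iterate_minimalPeriod
    exact Nat.dvd_antisymm h2 h3
  constructor
  · constructor
    · -- forward direction
      intro H
      have hfixℓ : ∀ x ∈ Set.Icc 1 (q - 1), π^[ℓ] x = x := by
        intro x hx
        rw [← H x hx]
        exact Function.iterate_minimalPeriod
      have hmem : (q - 1) ∈ Set.Icc 1 (q - 1) := ⟨hn, le_refl _⟩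
      have hℓm : ℓ = m := by
        have hd := hmdvd _ hmem ℓ (hfixℓ _ hmem)
        exact ((hℓ.eq_one_or_self_of_dvd m hd).resolve_left (by omega)).symm
      subst hℓm
      -- evaluate at x = q - 1
      have e1 : psi (q - 1) (P * (q - 1) + S) = q - 1 := by
        rw [← hS (q - 1) hmem hmq]
        exact hfixℓ _ hmem
      have hSn : S = q - 1 := by
        unfold psi at e1
        rw [mul_comm P (q - 1), Nat.mul_add_mod] at e1
        by_cases h : S % (q - 1) = 0
        · have := Nat.le_of_dvd (by omega) (Nat.dvd_of_mod_eq_zero h)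
          omega
        · rw [if_neg h] at e1
          have := Nat.mod_lt S (show 0 < q - 1 by omega)
          omega
      refine ⟨rfl, ?_, ?_⟩
      · -- P ≡ 1 mod (q-1)/m
        rcases eq_or_lt_of_le hmn with heq | hlt
        · have h1 : (q - 1) / ℓ = 1 := by rw [heq, Nat.div_self (by omega)]
          rw [h1]
          exact Nat.modEq_one
        · have hmmem : ℓ ∈ Set.Icc 1 (q - 1) := ⟨by omega, by omega⟩
          have e2 : psi (q - 1) (P * ℓ + S) = ℓ := by
            rw [← hS ℓ hmmem dvd_rfl]
            exact hfixℓ _ hmmem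
          unfold psi at e2
          rw [hSn, Nat.add_mod_right] at e2
          by_cases h : P * ℓ % (q - 1) = 0
          · rw [if_pos h] at e2; omega
          · rw [if_neg h] at e2
            have hPm : P * ℓ ≡ ℓ [MOD q - 1] := by
              show P * ℓ % (q - 1) = ℓ % (q - 1)
              rw [e2, Nat.mod_eq_of_lt hlt]
            have hdvd1 : (q - 1) ∣ P * ℓ - ℓ :=
              (Nat.modEq_iff_dvd' (Nat.le_mul_of_pos_left _ (by omega))).mp hPm.symm
            rw [← Nat.sub_one_mul] at hdvd1
            have hdvd2 : (q - 1) / ℓ * ℓ ∣ (P - 1) * ℓ := by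
              rwa [Nat.div_mul_cancel hmq]
            have hdvd3 : (q - 1) / ℓ ∣ P - 1 :=
              (mul_dvd_mul_iff_right (show (ℓ : ℕ) ≠ 0 by omega)).mp hdvd2
            exact ((Nat.modEq_iff_dvd' hP1le).mpr hdvd3).symm
      · show S % (q - 1) = 0 % (q - 1)
        simp [hSn]
    · -- backward direction
      rintro ⟨hℓm, hPmod, hS0⟩ x hx
      rw [key hPmod hS0 x hx, hℓm]
  · -- cardinality
    rintro ⟨hℓm, hPmod, hS0⟩
    have hmp := key hPmod hS0
    have hfe : ((Finset.Icc 1 (q - 1)).filter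
        (fun x => m ∣ x ∧ Function.minimalPeriod π x = m)) =
        ((Finset.Icc 1 (q - 1)).filter (fun x => m ∣ x)) := by
      apply Finset.filter_congr
      intro x hx
      simp only [Finset.mem_Icc] at hx
      have := hmp x ⟨hx.1, hx.2⟩
      simp [this]
    rw [hfe]
    have hIcc : Finset.Icc 1 (q - 1) = Finset.Ioc 0 (q - 1) := by
      rw [← Finset.Icc_add_one_left_eq_Ioc, zero_add]
    rw [hIcc]
    exact Nat.Ioc_filter_dvd_card_eq_div (q - 1) m
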